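/- Let q be a self-join-free Boolean conjunctive query, G an atom and y a variable with G attacks y and FD(q) ⊭ key(G) → y. If FD(q) ⊨ x → y, then G attacks x. -/

import Mathlib

/-- A fact `R(a₁,…,aₙ)`: relation name, primary-key values, non-key values. -/
structure DBFact where
  rel : ℕ
  key : List ℕ
  rest : List ℕ
deriving DecidableEq

/-- Two facts are key-equal if they have the same relation name and primary-key value. -/
def keyEq (A B : DBFact) : Prop := A.rel = B.rel ∧ A.key = B.key

instance (A B : DBFact) : Decidable (keyEq A B) :=
  inferInstanceAs (Decidable (_ ∧ _))

/-- A set of facts is consistent if it contains no two distinct key-equal facts. -/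
def Consistent (s : Finset DBFact) : Prop := ∀ A ∈ s, ∀ B ∈ s, keyEq A B → A = B

/-- A repair of `db` is a maximal (w.r.t. ⊆) consistent subset of `db`. -/
def Repair (db r : Finset DBFact) : Prop :=
  r ⊆ db ∧ Consistent r ∧ ∀ r', r' ⊆ db → Consistent r' → r ⊆ r' → r = r'

/-- A term is a variable (inl) or a constant (inr). -/
abbrev Term := ℕ ⊕ ℕ

/-- An atom `R(t₁,…,tₙ)` with key positions and non-key positions. -/
structure Atom where
  rel : ℕ
  key : List Term
  rest : List Term
deriving DecidableEq

def termVars (l : List Term) : Finset ℕ := (l.filterMap fun t => t.getLeft?).toFinset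

/-- Variables at primary-key positions of an atom. -/
def keyVars (F : Atom) : Finset ℕ := termVars F.key

/-- All variables of an atom. -/
def atomVars (F : Atom) : Finset ℕ := termVars F.key ∪ termVars F.rest

/-- A query (finite set of atoms) is self-join-free: no relation name occurs twice. -/
def SJF (q : Finset Atom) : Prop := ∀ F ∈ q, ∀ G ∈ q, F.rel = G.rel → F = G

/-- Apply a valuation (total map from variables to constants) to an atom, yielding a fact. -/
def applyVal (θ : ℕ → ℕ) (F : Atom) : DBFact :=
  ⟨F.rel, F.key.map (Sum.elim θ id), F.rest.map (Sum.elim θ id)⟩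

/-- Semantic implication of a functional dependency `X → Y` by a set of FDs
(two-tuple semantics, which is equivalent to the standard one for FDs). -/
def FDImplies (fds : Set (Set ℕ × Set ℕ)) (X Y : Set ℕ) : Prop :=
  ∀ θ μ : ℕ → ℕ,
    (∀ p ∈ fds, (∀ v ∈ p.1, θ v = μ v) → ∀ v ∈ p.2, θ v = μ v) →
    (∀ v ∈ X, θ v = μ v) → ∀ v ∈ Y, θ v = μ v

/-- `FD(q) = { key(F) → vars(F) : F ∈ q }`. -/
def FDs (q : Finset Atom) : Set (Set ℕ × Set ℕ) :=
  {p | ∃ F ∈ q, p = ((keyVars F : Set ℕ), (atomVars F : Set ℕ))}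

/-- `F⁺ = { x : FD(q \ {F}) ⊨ key(F) → x }`. -/
def plus (q : Finset Atom) (F : Atom) : Set ℕ :=
  {x | FDImplies (FDs (q.erase F)) (keyVars F : Set ℕ) {x}}

/-- One step of a witness for an attack by `F`: consecutive atoms share a variable outside `F⁺`. -/
def AttackStep (q : Finset Atom) (F : Atom) (A B : Atom) : Prop :=
  ¬ ((atomVars A ∩ atomVars B : Finset ℕ) : Set ℕ) ⊆ plus q F

/-- `F` attacks `G` in the attack graph of `q`. -/
def Attacks (q : Finset Atom) (F G : Atom) : Prop :=
  F ≠ G ∧ F ∈ q ∧ ∃ L : List Atom, (∀ A ∈ L, A ∈ q) ∧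
    List.Chain (AttackStep q F) F L ∧ (F :: L).getLast (List.cons_ne_nil F L) = G

/-- `F` attacks the variable `z`. -/
def AttacksVar (q : Finset Atom) (F : Atom) (z : ℕ) : Prop :=
  z ∉ plus q F ∧ F ∈ q ∧ ∃ L : List Atom, (∀ A ∈ L, A ∈ q) ∧
    List.Chain (AttackStep q F) F L ∧ z ∈ atomVars ((F :: L).getLast (List.cons_ne_nil F L))

/-- `r ⊨ ζ(q)` for a valuation `ζ` over the variable set `X`. -/
def Sat (r : Finset DBFact) (q : Finset Atom) (X : Finset ℕ) (ζ : ℕ → ℕ) : Prop :=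
  ∃ θ : ℕ → ℕ, (∀ v ∈ X, θ v = ζ v) ∧ ∀ F ∈ q, applyVal θ F ∈ r

/-- `r ⊨ q`. -/
def Sat0 (r : Finset DBFact) (q : Finset Atom) : Prop :=
  ∃ θ : ℕ → ℕ, ∀ F ∈ q, applyVal θ F ∈ r

/-- A fact `A` is relevant for `q` in `r` if `A ∈ θ(q) ⊆ r` for some valuation `θ`. -/
def Relevant (A : DBFact) (q : Finset Atom) (r : Finset DBFact) : Prop :=
  ∃ θ : ℕ → ℕ, (∃ F ∈ q, applyVal θ F = A) ∧ ∀ F ∈ q, applyVal θ F ∈ r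

/-- Syntactic closure of a variable set under the FDs of `q`. -/
inductive Cl (q : Finset Atom) (X : Set ℕ) : ℕ → Prop
  | base {v : ℕ} : v ∈ X → Cl q X v
  | step {F : Atom} {v : ℕ} : F ∈ q → (∀ w ∈ keyVars F, Cl q X w) → v ∈ atomVars F →
      Cl q X v

lemma FDImplies_mono {fds fds' : Set (Set ℕ × Set ℕ)} (hsub : fds ⊆ fds')
    {X Y : Set ℕ} (h : FDImplies fds X Y) : FDImplies fds' X Y := by
  intro θ μ hfds hX
  exact h θ μ (fun p hp => hfds p (hsub hp)) hX

lemma FDs_erase_subset (q : Finset Atom) (G : Atom) : FDs (q.erase G) ⊆ FDs q := by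
  rintro p ⟨F, hF, rfl⟩
  exact ⟨F, Finset.mem_of_mem_erase hF, rfl⟩

/-- Completeness of the syntactic closure w.r.t. the two-tuple semantics. -/
lemma Cl_of_FDImplies {q : Finset Atom} {X : Set ℕ} {y : ℕ}
    (h : FDImplies (FDs q) X {y}) : Cl q X y := by
  classical
  set μ : ℕ → ℕ := fun v => if Cl q X v then v else v + 1 with hμ
  have hmu : ∀ v, v = μ v → Cl q X v := by
    intro v hv
    by_contra hc
    rw [hμ] at hv
    simp only [hc, if_false] at hv
    omega
  have hfds : ∀ p ∈ FDs q, (∀ v ∈ p.1, id v = μ v) → ∀ v ∈ p.2, id v = μ v := by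
    rintro p ⟨F, hF, rfl⟩ hkey v hv
    have hcl : Cl q X v := Cl.step hF (fun w hw => hmu w (hkey w hw)) hv
    simp [hμ, hcl]
  have hX : ∀ v ∈ X, id v = μ v := by
    intro v hv
    have : Cl q X v := Cl.base hv
    simp [hμ, this]
  exact hmu y (h id μ hfds hX y rfl)

/-- One application of the FD of an atom. -/
lemma FDImplies_atom {q : Finset Atom} {F : Atom} (hF : F ∈ q) {u : ℕ}
    (hu : u ∈ atomVars F) : FDImplies (FDs q) (keyVars F : Set ℕ) {u} := by
  intro θ μ hfds hkey v hv
  have := hfds ((keyVars F : Set ℕ), (atomVars F : Set ℕ)) ⟨F, hF, rfl⟩ hkey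
  rcases hv with rfl
  exact this v hu

/-- Transitive composition of FD implications. -/
lemma FDImplies_trans {fds : Set (Set ℕ × Set ℕ)} {X Y : Set ℕ} {u : ℕ}
    (h1 : ∀ w ∈ Y, FDImplies fds X {w}) (h2 : FDImplies fds Y {u}) :
    FDImplies fds X {u} := by
  intro θ μ hfds hX
  exact h2 θ μ hfds (fun w hw => h1 w hw θ μ hfds hX w rfl)

lemma chain_append_singleton {α : Type*} {R : α → α → Prop} :
    ∀ (a : α) (l : List α) (b : α), List.Chain R a l →
      R ((a :: l).getLast (List.cons_ne_nil a l)) b → List.Chain R a (l ++ [b])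
  | a, [], b, _, hR => List.Chain.cons hR List.Chain.nil
  | a, c :: l', b, hch, hR => by
      obtain ⟨hac, hch'⟩ := List.isChain_cons_cons.mp hch
      exact List.Chain.cons hac (chain_append_singleton c l' b hch' hR)

lemma getLast_cons_append_singleton {α : Type*} (a b : α) (l : List α) :
    (a :: (l ++ [b])).getLast (List.cons_ne_nil _ _) = b := by
  induction l generalizing a with
  | nil => rfl
  | cons c l ih => exact ih c

/-- If `G` attacks `y`, `FD(q) ⊭ key(G) → y`, and `FD(q) ⊨ x → y`, then `G` attacks `x`. -/
theorem attack_transitivity_var (q : Finset Atom) (hq : SJF q) (G : Atom) (hG : G ∈ q)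
    (x y : ℕ) (hatt : AttacksVar q G y)
    (hnimp : ¬ FDImplies (FDs q) (keyVars G : Set ℕ) {y})
    (himp : FDImplies (FDs q) {x} {y}) :
    AttacksVar q G x := by
  have hcl : Cl q {x} y := Cl_of_FDImplies himp
  -- main induction: descend along the closure derivation of y
  have main : ∀ u, Cl q {x} u → ¬ FDImplies (FDs q) (keyVars G : Set ℕ) {u} →
      AttacksVar q G u → AttacksVar q G x := by
    intro u hclu
    induction hclu with
    | base hv =>
        rcases hv with rfl
        exact fun _ h => h
    | @step F u hF hkey hu ih =>
        intro hnu hattu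
        -- find w ∈ key(F) with FD(q) ⊭ key(G) → w
        have hw : ∃ w ∈ keyVars F, ¬ FDImplies (FDs q) (keyVars G : Set ℕ) {w} := by
          by_contra hc
          push_neg at hc
          exact hnu (FDImplies_trans (fun w hw => hc w hw) (FDImplies_atom hF hu))
        rcases hw with ⟨w, hwF, hnw⟩
        -- w is not in G⁺
        have hwplus : w ∉ plus q G := fun hp =>
          hnw (FDImplies_mono (FDs_erase_subset q G) hp)
        have huplus : u ∉ plus q G := fun hp =>
          hnu (FDImplies_mono (FDs_erase_subset q G) hp)
        -- extend the chain witnessing the attack on u by the atom F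
        rcases hattu with ⟨_, _, L, hLq, hch, hlast⟩
        have hattw : AttacksVar q G w := by
          refine ⟨hwplus, hG, L ++ [F], ?_, ?_, ?_⟩
          · intro A hA
            rcases List.mem_append.mp hA with h | h
            · exact hLq A h
            · rcases List.mem_singleton.mp h with rfl; exact hF
          · refine chain_append_singleton G L F hch ?_
            intro hsub
            exact huplus (hsub (by
              simp only [Finset.coe_inter, Set.mem_inter_iff, Finset.mem_coe]
              exact ⟨hlast, hu⟩))
          · rw [getLast_cons_append_singleton]
            exact Finset.mem_union_left _ hwF
        exact ih w hwF hnw hattw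
  exact main y hcl hnimp hatt
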